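/- In the single-period Private Patient Problem with only double rooms, if both βf = 1 and βm = 1 (i.e., F − F* and M − M* are both odd with F* ≥ 1 and M* ≥ 1) and the number of private patients equals α + 1 where α = |R| − ⌈(F−F*)/2⌉ − ⌈(M−M*)/2⌉, then s^max = F* + M* − 1: exactly one private patient must share a room, and F* + M* − 1 private patients alone in rooms is achievable. -/
import Mathlib


/-- An achievable value of the Private Patient Problem with only double rooms. -/
def PPPAchievable {ι : Type*} (R : Finset ι) (F Fs M Ms s : ℕ) : Prop :=
  ∃ SF SFs SM SMs : Finset ι,
    SF ⊆ R ∧ SFs ⊆ R ∧ SM ⊆ R ∧ SMs ⊆ R ∧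
    Disjoint SF SFs ∧ Disjoint SF SM ∧ Disjoint SF SMs ∧
    Disjoint SFs SM ∧ Disjoint SFs SMs ∧ Disjoint SM SMs ∧
    F ≤ 2 * SF.card + SFs.card ∧ SFs.card ≤ Fs ∧
    M ≤ 2 * SM.card + SMs.card ∧ SMs.card ≤ Ms ∧
    s = SFs.card + SMs.card

theorem ppp_one_private_shares {ι : Type*} (R : Finset ι) (F Fs M Ms : ℕ)
    (hF : Fs ≤ F) (hM : Ms ≤ M)
    (hfeas : (F + 1) / 2 + (M + 1) / 2 ≤ R.card)
    (hβf : Odd (F - Fs)) (hβm : Odd (M - Ms)) (hFs : 1 ≤ Fs) (hMs : 1 ≤ Ms)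
    (hα : Fs + Ms = (R.card - (F - Fs + 1) / 2 - (M - Ms + 1) / 2) + 1) :
    IsGreatest {s | PPPAchievable R F Fs M Ms s} (Fs + Ms - 1) := by
  classical
  obtain ⟨k, hk⟩ := hβf
  obtain ⟨l, hl⟩ := hβm
  have hFeq : F = Fs + (2 * k + 1) := by omega
  have hMeq : M = Ms + (2 * l + 1) := by omega
  have hRcard : (k + 1) + Fs + ((l + 1) + (Ms - 1)) = R.card := by omega
  constructor
  · -- achievability
    obtain ⟨SF, hSF, hSFc⟩ := Finset.exists_subset_card_eq
      (show k + 1 ≤ R.card by omega)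
    have h2 : Fs ≤ (R \ SF).card := by
      rw [Finset.card_sdiff_of_subset hSF]; omega
    obtain ⟨SFs, hSFs, hSFsc⟩ := Finset.exists_subset_card_eq h2
    have h3 : l + 1 ≤ ((R \ SF) \ SFs).card := by
      rw [Finset.card_sdiff_of_subset hSFs, Finset.card_sdiff_of_subset hSF]; omega
    obtain ⟨SM, hSM, hSMc⟩ := Finset.exists_subset_card_eq h3
    have h4 : Ms - 1 ≤ (((R \ SF) \ SFs) \ SM).card := by
      rw [Finset.card_sdiff_of_subset hSM, Finset.card_sdiff_of_subset hSFs, Finset.card_sdiff_of_subset hSF]; omega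
    obtain ⟨SMs, hSMs, hSMsc⟩ := Finset.exists_subset_card_eq h4
    refine ⟨SF, SFs, SM, SMs, hSF,
      hSFs.trans Finset.sdiff_subset,
      (hSM.trans Finset.sdiff_subset).trans Finset.sdiff_subset,
      ((hSMs.trans Finset.sdiff_subset).trans Finset.sdiff_subset).trans Finset.sdiff_subset,
      Finset.disjoint_sdiff.mono_right hSFs,
      Finset.disjoint_sdiff.mono_right (hSM.trans Finset.sdiff_subset),
      Finset.disjoint_sdiff.mono_right
        ((hSMs.trans Finset.sdiff_subset).trans Finset.sdiff_subset),
      Finset.disjoint_sdiff.mono_right hSM,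
      Finset.disjoint_sdiff.mono_right (hSMs.trans Finset.sdiff_subset),
      Finset.disjoint_sdiff.mono_right hSMs,
      by omega, by omega, by omega, by omega, by omega⟩
  · rintro s ⟨SF, SFs, SM, SMs, hSF, hSFs, hSM, hSMs, d1, d2, d3, d4, d5, d6,
      c1, c2, c3, c4, hs⟩
    have hunion : (SF ∪ SFs ∪ SM ∪ SMs) ⊆ R := by
      intro x hx
      simp only [Finset.mem_union] at hx
      rcases hx with ((h | h) | h) | h
      exacts [hSF h, hSFs h, hSM h, hSMs h]
    have hcard := Finset.card_le_card hunion
    rw [Finset.card_union_of_disjoint (by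
          simp [Finset.disjoint_union_left, d3, d5, d6]),
        Finset.card_union_of_disjoint (by
          simp [Finset.disjoint_union_left, d2, d4]),
        Finset.card_union_of_disjoint d1] at hcard
    omega
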